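/- For every β < 1/2 there exists a constant c = c(β) > 0 such that for every k ∈ ℤ₀ and every function f : ℤ₀² → ℂ one has ( Σ_{p,q∈ℤ₀, p+q=k} |f(p,q)| )² ≤ c · (k²)^{2β−1} · Σ_{p,q∈ℤ₀, p+q=k} (p² + q²)^{3/2−2β} |f(p,q)|², as an inequality in [0,∞]. -/

import Mathlib

open scoped BigOperators ENNReal NNReal Real
open MeasureTheory Filter

noncomputable section

/-- The nonzero integers `ℤ₀`. -/
abbrev Z0 : Type := {k : ℤ // k ≠ 0}

/-- A Fock kernel family in Fourier variables: for each `n` a kernel on `ℤ₀ⁿ`. -/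
abbrev FockV : Type := (n : ℕ) → (Fin n → Z0) → ℂ

/-- Symmetry of all kernels under permutation of the arguments. -/
def IsSymmFock (φ : FockV) : Prop :=
  ∀ (n : ℕ) (σ : Equiv.Perm (Fin n)) (k : Fin n → Z0), φ n (fun i => k (σ i)) = φ n k

/-- `energy k = |2πk₁|² + ⋯ + |2πkₙ|²`. -/
def energy {n : ℕ} (k : Fin n → Z0) : ℝ :=
  ∑ i, (2 * Real.pi * ((k i).1 : ℝ)) ^ 2

/-- Squared weighted norm `‖v(𝒩)(−ℒ₀)^γ φ‖²`, valued in `[0,∞]`. -/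
def wnormSq (v : ℕ → ℝ) (γ : ℝ) (φ : FockV) : ℝ≥0∞ :=
  ∑' (n : ℕ) (k : Fin n → Z0),
    (Nat.factorial n : ℝ≥0∞) * ENNReal.ofReal ((v n) ^ 2) *
      ENNReal.ofReal (energy k ^ (2 * γ)) * ((‖φ n k‖₊ : ℝ≥0∞) ^ 2)

/-- Weighted norm `‖v(𝒩)(−ℒ₀)^γ φ‖`, valued in `[0,∞]`. -/
def wnorm (v : ℕ → ℝ) (γ : ℝ) (φ : FockV) : ℝ≥0∞ :=
  wnormSq v γ φ ^ (1/2 : ℝ)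

/-- Fourier cutoff indicator `1_{|j| ≤ m}` for `m ∈ ℕ∪{∞}`. -/
def indm (m : ℕ∞) (j : ℤ) : ℂ :=
  if (j.natAbs : ℕ∞) ≤ m then 1 else 0

/-- Unsymmetrized kernel of `𝒢ᵐ₊φ`. -/
def gplusKer (m : ℕ∞) (φ : FockV) : FockV := fun n k =>
  match n, k with
  | 0, _ => 0
  | 1, _ => 0
  | (n+2), k =>
    if h : (k 0).1 + (k 1).1 ≠ 0 then
      (-(n+1) : ℂ) * indm m (k 0).1 * indm m (k 1).1 * indm m ((k 0).1 + (k 1).1) *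
        (2 * Real.pi * Complex.I * (((k 0).1 + (k 1).1 : ℤ) : ℂ)) *
        φ (n+1) (Fin.cons ⟨(k 0).1 + (k 1).1, h⟩ (fun i => k i.succ.succ))
    else 0

/-- Summand (in `p`) of the series defining the kernel of `𝒢ᵐ₋φ`. -/
def gminusTerm (m : ℕ∞) (φ : FockV) (n : ℕ) (k : Fin (n+1) → Z0) (p : Z0) : ℂ :=
  if h : (k 0).1 - p.1 ≠ 0 then
    indm m p.1 * indm m ((k 0).1 - p.1) *
      φ (n+2) (Fin.cons p (Fin.cons ⟨(k 0).1 - p.1, h⟩ (fun i => k i.succ)))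
  else 0

/-- Unsymmetrized kernel of `𝒢ᵐ₋φ`. -/
def gminusKer (m : ℕ∞) (φ : FockV) : FockV := fun n k =>
  match n, k with
  | 0, _ => 0
  | (n+1), k =>
    -(2 * Real.pi * Complex.I * ((k 0).1 : ℂ)) * ((n+1 : ℕ) : ℂ) * ((n+2 : ℕ) : ℂ) *
      indm m (k 0).1 * ∑' p : Z0, gminusTerm m φ n k p

/-- Symmetrization of a kernel family. -/
def symKer (ψ : FockV) : FockV := fun n k =>
  (Nat.factorial n : ℂ)⁻¹ * ∑ σ : Equiv.Perm (Fin n), ψ n (fun i => k (σ i))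

def Gplus (m : ℕ∞) (φ : FockV) : FockV := symKer (gplusKer m φ)
def Gminus (m : ℕ∞) (φ : FockV) : FockV := symKer (gminusKer m φ)
def Gfull (m : ℕ∞) (φ : FockV) : FockV := Gplus m φ + Gminus m φ

/-- Restriction of a kernel family to frequencies `max_i |k_i| ≥ N n`. -/
def cutAbove (N : ℕ → ℝ) (ψ : FockV) : FockV := fun n k =>
  haveI := Classical.propDecidable (∃ i : Fin n, N n ≤ ((k i).1.natAbs : ℝ))
  if ∃ i : Fin n, N n ≤ ((k i).1.natAbs : ℝ) then ψ n k else 0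

/-- `𝒢^{m,≻}` with cutoff `N`. -/
def Gsucc (m : ℕ∞) (N : ℕ → ℝ) (φ : FockV) : FockV := cutAbove N (Gfull m φ)
/-- `𝒢^{m,≺} := 𝒢ᵐ − 𝒢^{m,≻}`. -/
def Gprec (m : ℕ∞) (N : ℕ → ℝ) (φ : FockV) : FockV := Gfull m φ - Gsucc m N φ

/-- The cutoff `Nₙ = L(1+n)³`. -/
def cutN (L : ℝ) : ℕ → ℝ := fun n => L * (1 + n : ℝ) ^ 3

/-- `ℒ₀`, multiplying the `n`-th kernel by `−(|2πk₁|²+⋯+|2πkₙ|²)`. -/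
def L0op (φ : FockV) : FockV := fun n k => ((-(energy k) : ℝ) : ℂ) * φ n k

/-- `(−ℒ₀)^γ`, multiplying the `n`-th kernel by `(|2πk₁|²+⋯+|2πkₙ|²)^γ`. -/
def L0pow (γ : ℝ) (φ : FockV) : FockV := fun n k => ((energy k ^ γ : ℝ) : ℂ) * φ n k

/-- The Galerkin generator `ℒᵐ = ℒ₀ + 𝒢ᵐ`. -/
def Lm (m : ℕ∞) (φ : FockV) : FockV := L0op φ + Gfull m φ

/-- The remainder `φ♯ = φ − (−ℒ₀)^{−1}𝒢^{m,≻}φ` (cutoff `Nₙ = L(1+n)³`). -/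
def sharpOf (m : ℕ∞) (L : ℝ) (φ : FockV) : FockV :=
  φ - L0pow (-1) (Gsucc m (cutN L) φ)

/-- The generator on controlled functions: `ℒφ := ℒ₀φ♯ + 𝒢^≺φ`. -/
def Lgen (m : ℕ∞) (L : ℝ) (φ : FockV) : FockV :=
  L0op (sharpOf m L φ) + Gprec m (cutN L) φ

/-- Polynomial weight `n ↦ (1+n)^β`. -/
def pw (β : ℝ) : ℕ → ℝ := fun n => (1 + n : ℝ) ^ β

/-- The constant weight `1`. -/
def wone : ℕ → ℝ := fun _ => 1

/-- `w` is a weight with admissible constant `W`: `w(n) ≤ W·w(n±1)`. -/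
def IsWeightBound (w : ℕ → ℝ) (W : ℝ) : Prop :=
  (∀ n, 0 < w n) ∧ (∀ n, w n ≤ W * w (n+1)) ∧ (∀ n, w (n+1) ≤ W * w n)

/-- "The controlled fixed-point construction applies": the map
`ψ ↦ (−ℒ₀)^{−1}𝒢^{m,≻}ψ` is a `1/2`-contraction for the norm `‖w(𝒩)(−ℒ₀)^γ·‖`. -/
def FixedPointOK (m : ℕ∞) (w : ℕ → ℝ) (γ L : ℝ) : Prop :=
  ∀ ψ : FockV, IsSymmFock ψ →
    wnorm w γ (L0pow (-1) (Gsucc m (cutN L) ψ)) ≤ 2⁻¹ * wnorm w γ ψ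

/-- The domain `𝒟_w(ℒ)` (with cutoff `Nₙ = L(1+n)³`). -/
def InDomainW (w : ℕ → ℝ) (L : ℝ) (φ : FockV) : Prop :=
  IsSymmFock φ ∧ wnorm w (1/2) φ ≠ ⊤ ∧
    wnorm w 1 (sharpOf ⊤ L φ) ≠ ⊤ ∧
    wnorm (fun n => w n * pw (9/2) n) (1/2) (sharpOf ⊤ L φ) ≠ ⊤

def polyNormSq (β κ : ℝ) (φ : FockV) : ℝ≥0∞ := wnormSq (pw β) κ φ
def polyNorm (β κ : ℝ) (φ : FockV) : ℝ≥0∞ := wnorm (pw β) κ φ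

/-- A smooth solution of the Galerkin backward equation `∂ₜφ = ℒᵐφ` on `[0,∞)`:
symmetric, locally bounded in every norm `‖(1+𝒩)^β(−ℒ₀)^κ·‖`, continuously
differentiable with respect to each of these norms, with derivative `ℒᵐφ`. -/
def GalerkinSol (m : ℕ∞) (φ : ℝ → FockV) : Prop :=
  (∀ t, 0 ≤ t → IsSymmFock (φ t)) ∧
  (∀ β κ : ℝ, 0 ≤ β → 0 ≤ κ → ∀ T : ℝ, 0 < T → ∃ B : ℝ,
      ∀ t ∈ Set.Icc (0:ℝ) T, polyNorm β κ (φ t) ≤ ENNReal.ofReal B) ∧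
  (∀ β κ : ℝ, 0 ≤ β → 0 ≤ κ → ∀ s : ℝ, 0 ≤ s →
      Tendsto (fun t => polyNorm β κ (φ t - φ s)) (nhdsWithin s (Set.Ici 0)) (nhds 0)) ∧
  (∀ β κ : ℝ, 0 ≤ β → 0 ≤ κ → ∀ s : ℝ, 0 ≤ s →
      Tendsto (fun t => polyNorm β κ ((t - s)⁻¹ • (φ t - φ s) - Lm m (φ s)))
        (nhdsWithin s (Set.Ici 0 \ {s})) (nhds 0)) ∧
  (∀ β κ : ℝ, 0 ≤ β → 0 ≤ κ → ∀ s : ℝ, 0 ≤ s →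
      Tendsto (fun t => polyNorm β κ (Lm m (φ t) - Lm m (φ s)))
        (nhdsWithin s (Set.Ici 0)) (nhds 0))

/-- A solution of the backward equation `∂ₜφ = ℒφ` on `[0,∞)` taking values in the
domain `𝒟(ℒ)`, continuously differentiable in the norm of `ΓL²`. -/
def BackwardSol (L : ℝ) (ψ : ℝ → FockV) : Prop :=
  (∀ t, 0 ≤ t → InDomainW wone L (ψ t)) ∧
  (∀ s, 0 ≤ s →
      Tendsto (fun t => wnorm wone 0 ((t - s)⁻¹ • (ψ t - ψ s) - Lgen ⊤ L (ψ s)))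
        (nhdsWithin s (Set.Ici 0 \ {s})) (nhds 0)) ∧
  (∀ s, 0 ≤ s →
      Tendsto (fun t => wnorm wone 0 (Lgen ⊤ L (ψ t) - Lgen ⊤ L (ψ s)))
        (nhdsWithin s (Set.Ici 0)) (nhds 0))

/-- The `L²(μ)` pairing `⟨φ,ψ⟩ = Σ_n n! Σ_k conj(φ̂ₙ(k))·ψ̂ₙ(k)`. -/
def pairing (φ ψ : FockV) : ℂ :=
  ∑' x : (Σ n : ℕ, Fin n → Z0),
    (Nat.factorial x.1 : ℂ) * (starRingEnd ℂ) (φ x.1 x.2) * ψ x.1 x.2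

/-- Absolute convergence of the pairing `⟨φ,ψ⟩`. -/
def PairSummable (φ ψ : FockV) : Prop :=
  Summable (fun x : (Σ n : ℕ, Fin n → Z0) =>
    (Nat.factorial x.1 : ℝ) * ‖φ x.1 x.2 * ψ x.1 x.2‖)

end

section AuxCCS

/-- Cauchy–Schwarz for `ℝ≥0∞`-valued tsums. -/
lemma aux_cs_tsum {ι : Type*} [Countable ι] (a b : ι → ℝ≥0∞) :
    (∑' i, a i * b i) ^ 2 ≤ (∑' i, a i ^ 2) * (∑' i, b i ^ 2) := by
  letI : MeasurableSpace ι := ⊤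
  have ha : Measurable a := measurable_from_top
  have hb : Measurable b := measurable_from_top
  have h := ENNReal.lintegral_mul_le_Lp_mul_Lq (μ := Measure.count (α := ι))
    (Real.holderConjugate_iff.mpr ⟨one_lt_two, by norm_num⟩ : (2:ℝ).HolderConjugate 2)
    ha.aemeasurable hb.aemeasurable
  simp only [Pi.mul_apply] at h
  rw [lintegral_count' (f := fun i => a i * b i) (ha.mul hb), lintegral_count' (ha.pow_const _),
    lintegral_count' (hb.pow_const _)] at h
  have h2 : ∀ x : ℝ≥0∞, (x ^ ((1:ℝ)/2)) ^ (2:ℕ) = x := by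
    intro x
    rw [← ENNReal.rpow_natCast (x ^ ((1:ℝ)/2)) 2, ← ENNReal.rpow_mul]
    norm_num
  have h3 : ∀ x : ℝ≥0∞, x ^ ((2:ℕ):ℝ) = x ^ (2:ℕ) := fun x => ENNReal.rpow_natCast x 2
  calc (∑' i, a i * b i) ^ 2
      ≤ ((∑' i, a i ^ (2:ℝ)) ^ ((1:ℝ)/2) * (∑' i, b i ^ (2:ℝ)) ^ ((1:ℝ)/2)) ^ 2 := by
        apply pow_le_pow_left' (by simpa using h)
    _ = (∑' i, a i ^ (2:ℝ)) * (∑' i, b i ^ (2:ℝ)) := by rw [mul_pow, h2, h2]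
    _ = (∑' i, a i ^ 2) * (∑' i, b i ^ 2) := by
        congr 1 <;> refine tsum_congr fun i => ?_
        · simp [h3 (a i)]
        · simp [h3 (b i)]

/-- MVT step: `(x+1)^{-(1+δ)} ≤ δ⁻¹ (x^{-δ} − (x+1)^{-δ})` for `x ≥ 1`. -/
lemma aux_step {δ : ℝ} (hδ : 0 < δ) {x : ℝ} (hx : 1 ≤ x) :
    (x + 1) ^ (-(1 + δ)) ≤ δ⁻¹ * (x ^ (-δ) - (x + 1) ^ (-δ)) := by
  have hx0 : (0:ℝ) < x := by linarith
  obtain ⟨c, hc, hder⟩ := exists_hasDerivAt_eq_slope (fun t : ℝ => t ^ (-δ))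
    (fun t : ℝ => (-δ) * t ^ (-δ - 1)) (by linarith : x < x + 1)
    (fun t ht => by
      have ht0 : (0:ℝ) < t := by have := ht.1; linarith
      exact (Real.continuousAt_rpow_const t (-δ) (Or.inl (ne_of_gt ht0))).continuousWithinAt)
    (fun t ht => by
      have ht0 : (0:ℝ) < t := by have := ht.1; linarith
      exact Real.hasDerivAt_rpow_const (Or.inl (ne_of_gt ht0)))
  have hc0 : (0:ℝ) < c := lt_trans hx0 hc.1
  have hsimp : (x + 1) - x = 1 := by ring
  rw [hsimp, div_one] at hder
  have heq : x ^ (-δ) - (x + 1) ^ (-δ) = δ * c ^ (-δ - 1) := by linarith [hder]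
  have hcb : (x + 1) ^ (-δ - 1) ≤ c ^ (-δ - 1) :=
    Real.rpow_le_rpow_of_nonpos hc0 hc.2.le (by linarith)
  have hexp : -(1 + δ) = -δ - 1 := by ring
  rw [hexp, heq]
  rw [inv_mul_cancel_left₀ (ne_of_gt hδ)]
  exact hcb

/-- Telescoped tail bound for finite sums. -/
lemma aux_tele {δ : ℝ} (hδ : 0 < δ) {M : ℕ} (hM : 1 ≤ M) :
    ∀ N, M ≤ N → ∑ n ∈ Finset.Ico (M+1) (N+1), ((n:ℝ)) ^ (-(1+δ)) ≤
      δ⁻¹ * ((M:ℝ) ^ (-δ) - (N:ℝ) ^ (-δ)) := by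
  intro N hN
  induction N, hN using Nat.le_induction with
  | base => simp
  | succ N hN ih =>
    rw [Finset.sum_Ico_succ_top (by omega)]
    have hstep := aux_step hδ (x := (N:ℝ)) (by exact_mod_cast hM.trans hN)
    push_cast
    push_cast at ih hstep
    rw [mul_sub] at *
    linarith

/-- Tail bound for the `ℝ≥0∞`-valued tsum. -/
lemma aux_tail {δ : ℝ} (hδ : 0 < δ) {M : ℕ} (hM : 1 ≤ M) :
    ∑' n : ℕ, ENNReal.ofReal (if M ≤ n then ((n:ℝ)) ^ (-(1+δ)) else 0) ≤
      ENNReal.ofReal ((1 + δ⁻¹) * (M:ℝ) ^ (-δ)) := by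
  set F : ℕ → ℝ := fun n => if M ≤ n then ((n:ℝ)) ^ (-(1+δ)) else 0 with hF
  have hnn : ∀ n, 0 ≤ F n := by
    intro n; simp only [hF]; split
    · positivity
    · exact le_rfl
  have hle : ∀ n, F n ≤ ((n:ℝ)) ^ (-(1+δ)) := by
    intro n; simp only [hF]; split
    · exact le_rfl
    · positivity
  have hsum : Summable F := Summable.of_nonneg_of_le hnn hle
    (Real.summable_nat_rpow.2 (by linarith))
  rw [← ENNReal.ofReal_tsum_of_nonneg hnn hsum]
  apply ENNReal.ofReal_le_ofReal
  apply Summable.tsum_le_of_sum_le hsum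
  intro s
  set N : ℕ := s.sup id + M with hN
  have hsub : ∑ n ∈ s, F n ≤ ∑ n ∈ Finset.Ico M (N+1), F n := by
    rw [show (∑ n ∈ s, F n) = ∑ n ∈ s ∩ Finset.Ico M (N+1), F n from
      (Finset.sum_subset (Finset.inter_subset_left) ?_).symm]
    · exact Finset.sum_le_sum_of_subset_of_nonneg Finset.inter_subset_right
        (fun n _ _ => hnn n)
    · intro n hns hni
      have h1 : n ≤ s.sup id := Finset.le_sup (f := id) hns
      have h2 : ¬ (M ≤ n) := by
        intro hMn
        exact hni (Finset.mem_inter.2 ⟨hns, Finset.mem_Ico.2 ⟨hMn, by omega⟩⟩)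
      simp [hF, h2]
  refine hsub.trans ?_
  have hMN : M < N + 1 := by omega
  rw [Finset.sum_eq_sum_Ico_succ_bot hMN]
  have hFM : F M = (M:ℝ) ^ (-(1+δ)) := by simp [hF]
  have h1 : ∑ n ∈ Finset.Ico (M+1) (N+1), F n
      = ∑ n ∈ Finset.Ico (M+1) (N+1), ((n:ℝ)) ^ (-(1+δ)) := by
    refine Finset.sum_congr rfl fun n hn => ?_
    have h' : M ≤ n := by have := (Finset.mem_Ico.1 hn).1; omega
    simp [hF, h']
  rw [hFM, h1]
  have h2 := aux_tele hδ hM N (by omega)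
  have h3 : (M:ℝ) ^ (-(1+δ)) ≤ (M:ℝ) ^ (-δ) :=
    Real.rpow_le_rpow_of_exponent_le (by exact_mod_cast hM) (by linarith)
  have h4 : (0:ℝ) ≤ (N:ℝ) ^ (-δ) := Real.rpow_nonneg (by positivity) _
  have h5 : (0:ℝ) ≤ δ⁻¹ := by positivity
  nlinarith [h2, h3, h4]

end AuxCCS

section Statements

open scoped BigOperators ENNReal NNReal Real
open MeasureTheory Filter

theorem convolution_cauchy_schwarz :
    ∀ β : ℝ, β < 1/2 → ∃ c : ℝ, 0 < c ∧ ∀ k : Z0, ∀ f : Z0 → Z0 → ℂ,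
      (∑' pq : {pq : Z0 × Z0 // pq.1.1 + pq.2.1 = k.1},
          (‖f pq.1.1 pq.1.2‖₊ : ℝ≥0∞)) ^ 2 ≤
        ENNReal.ofReal c * ENNReal.ofReal (((k.1 : ℝ)^2) ^ (2*β - 1)) *
          ∑' pq : {pq : Z0 × Z0 // pq.1.1 + pq.2.1 = k.1},
            ENNReal.ofReal (((pq.1.1.1 : ℝ)^2 + (pq.1.2.1 : ℝ)^2) ^ ((3:ℝ)/2 - 2*β)) *
              (‖f pq.1.1 pq.1.2‖₊ : ℝ≥0∞) ^ 2 := by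
  intro β hβ
  have hδ0 : (0:ℝ) < 2 - 4*β := by linarith
  have hδi : (0:ℝ) ≤ (2 - 4*β)⁻¹ := inv_nonneg.2 hδ0.le
  have h2δ : (0:ℝ) < 2 ^ (2 - 4*β) := Real.rpow_pos_of_pos two_pos _
  refine ⟨4 * (1 + (2 - 4*β)⁻¹) * 2 ^ (2 - 4*β), by nlinarith, ?_⟩
  intro k f
  set δ : ℝ := 2 - 4*β with hδdef
  set s : ℝ := (3:ℝ)/2 - 2*β with hsdef
  have hs0 : 0 < s := by rw [hsdef]; linarith
  -- basic positivity
  have hbase : ∀ x : {pq : Z0 × Z0 // pq.1.1 + pq.2.1 = k.1},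
      (0:ℝ) < (x.1.1.1 : ℝ)^2 + (x.1.2.1 : ℝ)^2 := by
    intro x
    have h1 : ((x.1.1.1 : ℤ) : ℝ) ≠ 0 := Int.cast_ne_zero.mpr x.1.1.2
    have h2 : (0:ℝ) < (x.1.1.1 : ℝ)^2 := pow_two_pos_of_ne_zero h1
    nlinarith [sq_nonneg ((x.1.2.1 : ℝ))]
  have hA0 : ∀ x : {pq : Z0 × Z0 // pq.1.1 + pq.2.1 = k.1},
      ENNReal.ofReal (((x.1.1.1 : ℝ)^2 + (x.1.2.1 : ℝ)^2) ^ s) ≠ 0 :=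
    fun x => ne_of_gt (ENNReal.ofReal_pos.2 (Real.rpow_pos_of_pos (hbase x) s))
  have hAtop : ∀ x : {pq : Z0 × Z0 // pq.1.1 + pq.2.1 = k.1},
      ENNReal.ofReal (((x.1.1.1 : ℝ)^2 + (x.1.2.1 : ℝ)^2) ^ s) ≠ ⊤ :=
    fun x => ENNReal.ofReal_ne_top
  -- Cauchy–Schwarz step
  set a : {pq : Z0 × Z0 // pq.1.1 + pq.2.1 = k.1} → ℝ≥0∞ :=
    fun x => (ENNReal.ofReal (((x.1.1.1 : ℝ)^2 + (x.1.2.1 : ℝ)^2) ^ s)) ^ (-(1/2) : ℝ) with hadef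
  set b : {pq : Z0 × Z0 // pq.1.1 + pq.2.1 = k.1} → ℝ≥0∞ :=
    fun x => (ENNReal.ofReal (((x.1.1.1 : ℝ)^2 + (x.1.2.1 : ℝ)^2) ^ s)) ^ ((1/2) : ℝ) *
      (‖f x.1.1 x.1.2‖₊ : ℝ≥0∞) with hbdef
  have e1 : ∀ x, a x * b x = (‖f x.1.1 x.1.2‖₊ : ℝ≥0∞) := by
    intro x
    rw [hadef, hbdef]
    dsimp only
    rw [← mul_assoc, ← ENNReal.rpow_add _ _ (hA0 x) (hAtop x)]
    norm_num
  have e2 : ∀ x, a x ^ 2 = (ENNReal.ofReal (((x.1.1.1 : ℝ)^2 + (x.1.2.1 : ℝ)^2) ^ s))⁻¹ := by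
    intro x
    rw [hadef]
    dsimp only
    rw [← ENNReal.rpow_natCast _ 2, ← ENNReal.rpow_mul]
    norm_num [ENNReal.rpow_neg_one]
  have e3 : ∀ x, b x ^ 2 = ENNReal.ofReal (((x.1.1.1 : ℝ)^2 + (x.1.2.1 : ℝ)^2) ^ s) *
      (‖f x.1.1 x.1.2‖₊ : ℝ≥0∞) ^ 2 := by
    intro x
    rw [hbdef]
    dsimp only
    rw [mul_pow, ← ENNReal.rpow_natCast (_ ^ ((1/2):ℝ)) 2, ← ENNReal.rpow_mul]
    norm_num
  -- the weight-sum bound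
  set FN : ℕ → ℝ≥0∞ := fun n =>
    ENNReal.ofReal (if (k.1.natAbs : ℝ) ≤ 2*(n:ℝ) then ((n:ℝ)) ^ (-(1+δ)) else 0) with hFNdef
  have hone : ∀ (p q : Z0), (k.1.natAbs : ℝ) ≤ 2*((p.1.natAbs : ℕ) : ℝ) →
      ENNReal.ofReal (((p.1:ℝ)^2 + (q.1:ℝ)^2) ^ (-s)) ≤ FN p.1.natAbs := by
    intro p q hcond
    have hpne : ((p.1 : ℤ) : ℝ) ≠ 0 := Int.cast_ne_zero.mpr p.2
    have hp2 : (0:ℝ) < (p.1:ℝ)^2 := pow_two_pos_of_ne_zero hpne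
    have hpa : (0:ℝ) < ((p.1.natAbs : ℕ) : ℝ) := by
      have h1 : p.1.natAbs ≠ 0 := by have := p.2; omega
      exact_mod_cast Nat.pos_of_ne_zero h1
    have habs : (((p.1.natAbs : ℕ) : ℝ))^2 = (p.1:ℝ)^2 := by
      rw [Nat.cast_natAbs]; push_cast; rw [sq_abs]
    have hle1 : ((p.1:ℝ)^2 + (q.1:ℝ)^2) ^ (-s) ≤ ((p.1:ℝ)^2) ^ (-s) :=
      Real.rpow_le_rpow_of_nonpos hp2 (le_add_of_nonneg_right (sq_nonneg _)) (by linarith)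
    have heq : ((p.1:ℝ)^2) ^ (-s) = (((p.1.natAbs : ℕ) : ℝ)) ^ (-(1+δ)) := by
      rw [← habs, ← Real.rpow_natCast (((p.1.natAbs : ℕ) : ℝ)) 2, ← Real.rpow_mul hpa.le]
      congr 1
      rw [hsdef, hδdef]; push_cast; ring
    rw [hFNdef]
    dsimp only
    rw [if_pos hcond]
    exact ENNReal.ofReal_le_ofReal (by rw [← heq]; exact hle1)
  have hpt : ∀ x : {pq : Z0 × Z0 // pq.1.1 + pq.2.1 = k.1},
      (ENNReal.ofReal (((x.1.1.1 : ℝ)^2 + (x.1.2.1 : ℝ)^2) ^ s))⁻¹ ≤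
        FN x.1.1.1.natAbs + FN x.1.2.1.natAbs := by
    rintro ⟨⟨p, q⟩, hpq⟩
    dsimp only at hpq ⊢
    have hb : (0:ℝ) < (p.1:ℝ)^2 + (q.1:ℝ)^2 :=
      hbase ⟨⟨p, q⟩, hpq⟩
    have hinv : (ENNReal.ofReal (((p.1:ℝ)^2 + (q.1:ℝ)^2) ^ s))⁻¹ =
        ENNReal.ofReal (((p.1:ℝ)^2 + (q.1:ℝ)^2) ^ (-s)) := by
      rw [Real.rpow_neg hb.le, ENNReal.ofReal_inv_of_pos (Real.rpow_pos_of_pos hb s)]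
    rw [hinv]
    have hcase : k.1.natAbs ≤ 2 * p.1.natAbs ∨ k.1.natAbs ≤ 2 * q.1.natAbs := by omega
    rcases hcase with h | h
    · refine le_trans (hone p q ?_) le_self_add
      exact_mod_cast h
    · refine le_trans (le_trans (le_of_eq ?_) (hone q p ?_)) le_add_self
      · rw [add_comm ((p.1:ℝ)^2)]
      · exact_mod_cast h
  -- injectivity of coordinate maps
  have inj1 : Function.Injective
      (fun x : {pq : Z0 × Z0 // pq.1.1 + pq.2.1 = k.1} => x.1.1) := by
    rintro ⟨⟨p, q⟩, hx⟩ ⟨⟨p', q'⟩, hy⟩ h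
    simp only at h hx hy
    subst h
    have h2 : q = q' := Subtype.ext (by omega)
    subst h2
    rfl
  have inj2 : Function.Injective
      (fun x : {pq : Z0 × Z0 // pq.1.1 + pq.2.1 = k.1} => x.1.2) := by
    rintro ⟨⟨p, q⟩, hx⟩ ⟨⟨p', q'⟩, hy⟩ h
    simp only at h hx hy
    subst h
    have h2 : p = p' := Subtype.ext (by omega)
    subst h2
    rfl
  have inje : Function.Injective
      (fun p : Z0 => ((decide (0 < p.1), p.1.natAbs) : Bool × ℕ)) := by
    intro p q h
    rw [Prod.mk.injEq] at h
    have h1 : (0 < p.1) ↔ (0 < q.1) := decide_eq_decide.mp h.1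
    have h2 : p.1.natAbs = q.1.natAbs := h.2
    apply Subtype.ext
    by_cases hp0 : 0 < p.1
    · have hq0 : 0 < q.1 := h1.mp hp0
      omega
    · have hq0 : ¬ 0 < q.1 := fun h' => hp0 (h1.mpr h')
      omega
  -- folding to a sum over ℕ
  have hfold : (∑' p : Z0, FN p.1.natAbs) ≤ 2 * ∑' n : ℕ, FN n := by
    have h := ENNReal.tsum_comp_le_tsum_of_injective inje (fun y : Bool × ℕ => FN y.2)
    refine le_trans h (le_of_eq ?_)
    rw [ENNReal.tsum_prod']
    rw [tsum_bool]
    dsimp only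
    rw [two_mul]
  -- tail bound
  set M : ℕ := (k.1.natAbs + 1) / 2 with hMdef
  have hM1 : 1 ≤ M := by have := k.2; omega
  have htail0 : (∑' n : ℕ, FN n) ≤
      ∑' n : ℕ, ENNReal.ofReal (if M ≤ n then ((n:ℝ)) ^ (-(1+δ)) else 0) := by
    refine ENNReal.tsum_le_tsum fun n => ?_
    rw [hFNdef]
    dsimp only
    by_cases h : (k.1.natAbs : ℝ) ≤ 2*(n:ℝ)
    · have h' : k.1.natAbs ≤ 2*n := by exact_mod_cast h
      rw [if_pos h, if_pos (by omega : M ≤ n)]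
    · rw [if_neg h]
      simp
  have hδpos : (0:ℝ) < δ := hδ0
  have htail := aux_tail hδpos hM1
  -- comparison of M^{-δ} with the k-weight
  have hMk : ((M:ℕ) : ℝ) ^ (-δ) ≤ 2 ^ δ * ((k.1:ℝ)^2) ^ (2*β - 1) := by
    have hk1 : 1 ≤ k.1.natAbs := by have := k.2; omega
    have hka : (0:ℝ) < ((k.1.natAbs : ℕ) : ℝ) := by exact_mod_cast Nat.pos_of_ne_zero (by omega)
    have h2M : ((k.1.natAbs : ℕ) : ℝ) ≤ 2*((M:ℕ) : ℝ) := by exact_mod_cast (by omega : k.1.natAbs ≤ 2*M)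
    have hstepa : ((M:ℕ) : ℝ) ^ (-δ) ≤ (((k.1.natAbs : ℕ) : ℝ)/2) ^ (-δ) :=
      Real.rpow_le_rpow_of_nonpos (by positivity) (by linarith) (by linarith)
    have hstepb : (((k.1.natAbs : ℕ) : ℝ)/2) ^ (-δ) = 2 ^ δ * ((k.1.natAbs : ℕ) : ℝ) ^ (-δ) := by
      rw [Real.div_rpow hka.le (by norm_num : (0:ℝ) ≤ 2), Real.rpow_neg (by norm_num : (0:ℝ) ≤ 2),
        div_eq_mul_inv, inv_inv]
      ring
    have hstepc : ((k.1.natAbs : ℕ) : ℝ) ^ (-δ) = ((k.1:ℝ)^2) ^ (2*β - 1) := by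
      have hsq : (k.1:ℝ)^2 = ((k.1.natAbs : ℕ) : ℝ)^2 := by
        rw [Nat.cast_natAbs]; push_cast; rw [sq_abs]
      rw [hsq, ← Real.rpow_natCast ((k.1.natAbs : ℕ) : ℝ) 2, ← Real.rpow_mul hka.le]
      congr 1
      rw [hδdef]; push_cast; ring
    rw [hstepb, hstepc] at hstepa
    exact hstepa
  -- the key estimate on the weight sum
  have key : (∑' x : {pq : Z0 × Z0 // pq.1.1 + pq.2.1 = k.1},
        (ENNReal.ofReal (((x.1.1.1 : ℝ)^2 + (x.1.2.1 : ℝ)^2) ^ s))⁻¹) ≤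
      ENNReal.ofReal (4 * (1 + δ⁻¹) * 2 ^ δ) *
        ENNReal.ofReal (((k.1:ℝ)^2) ^ (2*β - 1)) := by
    have hs1 : (∑' x : {pq : Z0 × Z0 // pq.1.1 + pq.2.1 = k.1},
          (ENNReal.ofReal (((x.1.1.1 : ℝ)^2 + (x.1.2.1 : ℝ)^2) ^ s))⁻¹) ≤
        (∑' x : {pq : Z0 × Z0 // pq.1.1 + pq.2.1 = k.1}, FN x.1.1.1.natAbs) +
        (∑' x : {pq : Z0 × Z0 // pq.1.1 + pq.2.1 = k.1}, FN x.1.2.1.natAbs) :=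
      le_trans (ENNReal.tsum_le_tsum hpt) (by rw [ENNReal.tsum_add])
    have hs2a : (∑' x : {pq : Z0 × Z0 // pq.1.1 + pq.2.1 = k.1}, FN x.1.1.1.natAbs) ≤
        ∑' p : Z0, FN p.1.natAbs :=
      ENNReal.tsum_comp_le_tsum_of_injective inj1 (fun p : Z0 => FN p.1.natAbs)
    have hs2b : (∑' x : {pq : Z0 × Z0 // pq.1.1 + pq.2.1 = k.1}, FN x.1.2.1.natAbs) ≤
        ∑' p : Z0, FN p.1.natAbs :=
      ENNReal.tsum_comp_le_tsum_of_injective inj2 (fun p : Z0 => FN p.1.natAbs)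
    calc (∑' x : {pq : Z0 × Z0 // pq.1.1 + pq.2.1 = k.1},
          (ENNReal.ofReal (((x.1.1.1 : ℝ)^2 + (x.1.2.1 : ℝ)^2) ^ s))⁻¹)
        ≤ (∑' p : Z0, FN p.1.natAbs) + (∑' p : Z0, FN p.1.natAbs) :=
          le_trans hs1 (add_le_add hs2a hs2b)
      _ ≤ (2 * ∑' n : ℕ, FN n) + (2 * ∑' n : ℕ, FN n) := add_le_add hfold hfold
      _ = 4 * ∑' n : ℕ, FN n := by ring
      _ ≤ 4 * ENNReal.ofReal ((1 + δ⁻¹) * ((M:ℕ) : ℝ) ^ (-δ)) := by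
          exact mul_le_mul_right (le_trans htail0 htail) 4
      _ ≤ ENNReal.ofReal (4 * (1 + δ⁻¹) * 2 ^ δ) * ENNReal.ofReal (((k.1:ℝ)^2) ^ (2*β - 1)) := by
          rw [← ENNReal.ofReal_ofNat 4, ← ENNReal.ofReal_mul (by norm_num),
            ← ENNReal.ofReal_mul (by nlinarith)]
          refine ENNReal.ofReal_le_ofReal ?_
          have h40 : (0:ℝ) ≤ 4*(1+δ⁻¹) := by nlinarith
          calc 4*((1+δ⁻¹) * ((M:ℕ) : ℝ) ^ (-δ)) = (4*(1+δ⁻¹)) * ((M:ℕ) : ℝ) ^ (-δ) := by ring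
            _ ≤ (4*(1+δ⁻¹)) * (2 ^ δ * ((k.1:ℝ)^2) ^ (2*β - 1)) :=
              mul_le_mul_of_nonneg_left hMk h40
            _ = (4*(1+δ⁻¹)*2^δ) * (((k.1:ℝ)^2) ^ (2*β - 1)) := by ring
  -- assemble
  calc (∑' pq : {pq : Z0 × Z0 // pq.1.1 + pq.2.1 = k.1}, (‖f pq.1.1 pq.1.2‖₊ : ℝ≥0∞)) ^ 2
      = (∑' pq : {pq : Z0 × Z0 // pq.1.1 + pq.2.1 = k.1}, a pq * b pq) ^ 2 := by
        rw [tsum_congr e1]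
    _ ≤ (∑' pq : {pq : Z0 × Z0 // pq.1.1 + pq.2.1 = k.1}, a pq ^ 2) *
        (∑' pq : {pq : Z0 × Z0 // pq.1.1 + pq.2.1 = k.1}, b pq ^ 2) := aux_cs_tsum a b
    _ = (∑' pq : {pq : Z0 × Z0 // pq.1.1 + pq.2.1 = k.1},
          (ENNReal.ofReal (((pq.1.1.1 : ℝ)^2 + (pq.1.2.1 : ℝ)^2) ^ s))⁻¹) *
        (∑' pq : {pq : Z0 × Z0 // pq.1.1 + pq.2.1 = k.1},
          ENNReal.ofReal (((pq.1.1.1 : ℝ)^2 + (pq.1.2.1 : ℝ)^2) ^ s) *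
            (‖f pq.1.1 pq.1.2‖₊ : ℝ≥0∞) ^ 2) := by
        rw [tsum_congr e2, tsum_congr e3]
    _ ≤ ENNReal.ofReal (4 * (1 + δ⁻¹) * 2 ^ δ) * ENNReal.ofReal (((k.1:ℝ)^2) ^ (2*β - 1)) *
        (∑' pq : {pq : Z0 × Z0 // pq.1.1 + pq.2.1 = k.1},
          ENNReal.ofReal (((pq.1.1.1 : ℝ)^2 + (pq.1.2.1 : ℝ)^2) ^ s) *
            (‖f pq.1.1 pq.1.2‖₊ : ℝ≥0∞) ^ 2) := mul_le_mul_left key _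


end Statements
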